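/- Let W ∈ ℝ^{n×m} be a matrix of rank at most k. Then ‖W‖_* = min { ½(‖U‖_F² + ‖V‖_F²) : U ∈ ℝ^{n×k}, V ∈ ℝ^{m×k}, W = UVᵀ }, and the minimum is attained by some factorization W = UVᵀ. -/

import Mathlib

open Matrix

/-- The trace norm (nuclear norm) of a real matrix: the sum of its singular
values, i.e. the sum of the square roots of the eigenvalues of `Mᵀ * M`. -/
noncomputable def traceNorm {n d : ℕ} (M : Matrix (Fin n) (Fin d) ℝ) : ℝ :=
  ∑ i, Real.sqrt ((Matrix.isHermitian_conjTranspose_mul_self M).eigenvalues i)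

/-- The squared Frobenius norm of a real matrix. -/
noncomputable def frobSq {n d : ℕ} (M : Matrix (Fin n) (Fin d) ℝ) : ℝ :=
  ∑ i, ∑ j, (M i j)^2

namespace TraceNormAux

lemma sum_embed {k : ℕ} {ι : Type*} [Fintype ι] [DecidableEq ι] (e : ι ↪ Fin k) (f g : ι → ℝ) :
    ∑ c : Fin k, (∑ i, if e i = c then f i else 0) * (∑ j, if e j = c then g j else 0)
      = ∑ i, f i * g i := by
  have step1 : ∀ c : Fin k,
      (∑ i, if e i = c then f i else 0) * (∑ j, if e j = c then g j else 0)
      = ∑ i, if e i = c then f i * (∑ j, if e j = c then g j else 0) else 0 := by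
    intro c; rw [Finset.sum_mul]; congr 1; ext i; rw [ite_mul, zero_mul]
  simp only [step1]
  rw [Finset.sum_comm]
  congr 1; ext i
  rw [Finset.sum_ite_eq (Finset.univ : Finset (Fin k)) (e i)
    (fun c => f i * (∑ j, if e j = c then g j else 0))]
  simp only [Finset.mem_univ, if_true]
  have : ∀ j, (if e j = e i then g j else 0) = if j = i then g j else 0 := by
    intro j; simp [e.injective.eq_iff]
  rw [Finset.sum_congr rfl (fun j _ => this j), Finset.sum_ite_eq' Finset.univ i g]
  simp

lemma bessel {N : ℕ} {ι : Type*} [Fintype ι] [DecidableEq ι] (p : ι → Fin N → ℝ)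
    (hp : ∀ i j, ∑ a, p i a * p j a = if i = j then 1 else 0)
    (x : Fin N → ℝ) : ∑ i, (∑ a, p i a * x a) ^ 2 ≤ ∑ a, (x a) ^ 2 := by
  set c : ι → ℝ := fun i => ∑ a, p i a * x a with hc
  have T1 : ∑ a, x a * (∑ i, c i * p i a) = ∑ i, c i ^ 2 := by
    simp only [Finset.mul_sum]
    rw [Finset.sum_comm]
    congr 1; ext i
    rw [hc, pow_two, Finset.mul_sum]
    congr 1; ext a; ring
  have T2 : ∑ a, (∑ i, c i * p i a) ^ 2 = ∑ i, c i ^ 2 := by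
    have e1 : ∀ a, (∑ i, c i * p i a) ^ 2 = ∑ i, ∑ j, (c i * c j) * (p i a * p j a) := by
      intro a; rw [pow_two, Finset.sum_mul_sum]
      congr 1; ext i; congr 1; ext j; ring
    simp only [e1]
    rw [Finset.sum_comm]
    have e2 : ∀ i, ∑ a, ∑ j, (c i * c j) * (p i a * p j a)
        = ∑ j, (c i * c j) * ∑ a, (p i a * p j a) := by
      intro i; rw [Finset.sum_comm]
      exact Finset.sum_congr rfl fun j _ => (Finset.mul_sum _ _ _).symm
    simp only [e2, hp, mul_ite, mul_one, mul_zero]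
    congr 1; ext i
    rw [Finset.sum_ite_eq Finset.univ i (fun j => c i * c j)]
    simp [pow_two]
  have expand : ∑ a, (x a - ∑ i, c i * p i a) ^ 2
      = ∑ a, (x a) ^ 2 - ∑ i, c i ^ 2 := by
    have : ∀ a, (x a - ∑ i, c i * p i a) ^ 2
        = (x a) ^ 2 - 2 * (x a * (∑ i, c i * p i a)) + (∑ i, c i * p i a) ^ 2 := by
      intro a; ring
    simp only [this]
    rw [Finset.sum_add_distrib, Finset.sum_sub_distrib, ← Finset.mul_sum, T1, T2]
    ring
  have nn : 0 ≤ ∑ a, (x a - ∑ i, c i * p i a) ^ 2 :=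
    Finset.sum_nonneg fun a _ => sq_nonneg _
  rw [expand] at nn
  linarith

variable {n m : ℕ}

noncomputable def eval' (W : Matrix (Fin n) (Fin m) ℝ) : Fin m → ℝ :=
  (Matrix.isHermitian_conjTranspose_mul_self W).eigenvalues

noncomputable def evec (W : Matrix (Fin n) (Fin m) ℝ) (j : Fin m) : Fin m → ℝ :=
  ⇑((Matrix.isHermitian_conjTranspose_mul_self W).eigenvectorBasis j)

lemma eval'_nonneg (W : Matrix (Fin n) (Fin m) ℝ) (i : Fin m) : 0 ≤ eval' W i :=
  Matrix.eigenvalues_conjTranspose_mul_self_nonneg W i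

lemma evec_orth (W : Matrix (Fin n) (Fin m) ℝ) (i j : Fin m) :
    ∑ a, evec W i a * evec W j a = if i = j then 1 else 0 := by
  have h := (Matrix.isHermitian_conjTranspose_mul_self W).eigenvectorBasis.orthonormal
  rw [orthonormal_iff_ite] at h
  have := h i j
  rw [PiLp.inner_apply] at this
  simpa [evec, mul_comm] using this

lemma evec_complete (W : Matrix (Fin n) (Fin m) ℝ) (a b : Fin m) :
    ∑ i, evec W i a * evec W i b = if a = b then 1 else 0 := by
  have h2 : ((((Matrix.isHermitian_conjTranspose_mul_self W).eigenvectorUnitary) :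
        Matrix (Fin m) (Fin m) ℝ) *
      star (((Matrix.isHermitian_conjTranspose_mul_self W).eigenvectorUnitary) :
        Matrix (Fin m) (Fin m) ℝ)) = 1 :=
    (Matrix.mem_unitaryGroup_iff).mp
      ((Matrix.isHermitian_conjTranspose_mul_self W).eigenvectorUnitary).2
  have := congrFun (congrFun h2 a) b
  simp only [Matrix.mul_apply, Matrix.one_apply] at this
  simpa [Matrix.star_apply, evec] using this

lemma W_evec_dot (W : Matrix (Fin n) (Fin m) ℝ) (i j : Fin m) :
    ∑ a, (W *ᵥ evec W i) a * (W *ᵥ evec W j) a = eval' W j * (if i = j then 1 else 0) := by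
  have key : (W *ᵥ evec W i) ⬝ᵥ (W *ᵥ evec W j) = (evec W i) ⬝ᵥ ((Wᴴ * W) *ᵥ evec W j) := by
    rw [dotProduct_mulVec, dotProduct_mulVec, ← vecMul_transpose, vecMul_vecMul,
      conjTranspose_eq_transpose_of_trivial]
  rw [show (∑ a, (W *ᵥ evec W i) a * (W *ᵥ evec W j) a)
      = (W *ᵥ evec W i) ⬝ᵥ (W *ᵥ evec W j) from rfl, key,
    show (Wᴴ * W) *ᵥ evec W j = eval' W j • evec W j from
      (Matrix.isHermitian_conjTranspose_mul_self W).mulVec_eigenvectorBasis j]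
  simp only [dotProduct, Pi.smul_apply, smul_eq_mul]
  rw [← evec_orth W i j, Finset.mul_sum]
  congr 1; ext a; ring

noncomputable def sigma' (W : Matrix (Fin n) (Fin m) ℝ) : Fin m → ℝ :=
  fun i => Real.sqrt (eval' W i)

abbrev NZ (W : Matrix (Fin n) (Fin m) ℝ) : Type := {i : Fin m // eval' W i ≠ 0}

noncomputable def uvec (W : Matrix (Fin n) (Fin m) ℝ) (i : NZ W) : Fin n → ℝ :=
  fun a => (sigma' W i.1)⁻¹ * (W *ᵥ evec W i.1) a

lemma sigma'_nonneg (W : Matrix (Fin n) (Fin m) ℝ) (i : Fin m) : 0 ≤ sigma' W i :=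
  Real.sqrt_nonneg _

lemma sigma'_sq (W : Matrix (Fin n) (Fin m) ℝ) (i : Fin m) : sigma' W i ^ 2 = eval' W i :=
  Real.sq_sqrt (eval'_nonneg W i)

lemma sigma'_pos (W : Matrix (Fin n) (Fin m) ℝ) (i : NZ W) : 0 < sigma' W i.1 :=
  Real.sqrt_pos.mpr (lt_of_le_of_ne (eval'_nonneg W i.1) (Ne.symm i.2))

lemma sigma'_ne (W : Matrix (Fin n) (Fin m) ℝ) (i : NZ W) : sigma' W i.1 ≠ 0 :=
  ne_of_gt (sigma'_pos W i)

lemma evec_orth_nz (W : Matrix (Fin n) (Fin m) ℝ) (i j : NZ W) :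
    ∑ b, evec W i.1 b * evec W j.1 b = if i = j then 1 else 0 := by
  rw [evec_orth]
  simp [Subtype.ext_iff]

lemma evec_norm_one (W : Matrix (Fin n) (Fin m) ℝ) (i : Fin m) :
    ∑ b, evec W i b * evec W i b = 1 := by
  have := evec_orth W i i; simpa using this

lemma uvec_orth (W : Matrix (Fin n) (Fin m) ℝ) (i j : NZ W) :
    ∑ a, uvec W i a * uvec W j a = if i = j then 1 else 0 := by
  have h1 : ∑ a, uvec W i a * uvec W j a
      = (sigma' W i.1)⁻¹ * (sigma' W j.1)⁻¹
        * ∑ a, (W *ᵥ evec W i.1) a * (W *ᵥ evec W j.1) a := by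
    rw [Finset.mul_sum]; congr 1; ext a; simp only [uvec]; ring
  rw [h1, W_evec_dot]
  rcases eq_or_ne i j with h | h
  · subst h
    simp only [if_pos rfl, mul_one]
    rw [← sigma'_sq W i.1, pow_two]
    field_simp
    exact div_self (sigma'_ne W i)
  · have h2 : (i : Fin m) ≠ (j : Fin m) := fun hc => h (Subtype.ext hc)
    rw [if_neg h2, if_neg h, mul_zero, mul_zero]

lemma uvec_dot_W (W : Matrix (Fin n) (Fin m) ℝ) (i : NZ W) :
    ∑ a, uvec W i a * (W *ᵥ evec W i.1) a = sigma' W i.1 := by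
  have h0 := W_evec_dot W i.1 i.1
  simp only [if_pos rfl, ↓reduceIte, mul_one] at h0
  have h1 : ∑ a, uvec W i a * (W *ᵥ evec W i.1) a
      = (sigma' W i.1)⁻¹ * ∑ a, (W *ᵥ evec W i.1) a * (W *ᵥ evec W i.1) a := by
    rw [Finset.mul_sum]; congr 1; ext a; simp only [uvec]; ring
  rw [h1, h0, ← sigma'_sq W i.1, pow_two]
  field_simp

lemma uvec_norm_one (W : Matrix (Fin n) (Fin m) ℝ) (i : NZ W) :
    ∑ a, uvec W i a * uvec W i a = 1 := by
  have := uvec_orth W i i; simpa using this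

lemma W_evec_eq_zero (W : Matrix (Fin n) (Fin m) ℝ) (i : Fin m) (h : eval' W i = 0) :
    W *ᵥ evec W i = 0 := by
  have h2 : ∑ a, (W *ᵥ evec W i) a * (W *ᵥ evec W i) a = 0 := by
    rw [W_evec_dot W i i, h, zero_mul]
  ext a
  exact mul_self_eq_zero.mp
    ((Finset.sum_eq_zero_iff_of_nonneg (fun a _ => mul_self_nonneg _)).mp h2 a (Finset.mem_univ a))

lemma sum_subtype_ne {g : Fin m → ℝ} {p : Fin m → Prop} [DecidablePred p]
    (h0 : ∀ i, ¬ p i → g i = 0) : ∑ i : {i // p i}, g i.1 = ∑ i, g i := by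
  rw [← Finset.sum_subtype (Finset.univ.filter p) (by simp) g]
  exact Finset.sum_filter_of_ne (fun x _ hx => by by_contra hp; exact hx (h0 x hp))

lemma sum_sigma_nz (W : Matrix (Fin n) (Fin m) ℝ) :
    ∑ i : NZ W, sigma' W i.1 = ∑ i, sigma' W i :=
  sum_subtype_ne (fun i hi => by
    rw [not_not] at hi
    simp [sigma', hi])

lemma traceNorm_eq_sum_nz (W : Matrix (Fin n) (Fin m) ℝ) :
    traceNorm W = ∑ i : NZ W, sigma' W i.1 := by
  have h : traceNorm W = ∑ i, sigma' W i := rfl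
  rw [h, ← sum_sigma_nz]

lemma card_nz_le (W : Matrix (Fin n) (Fin m) ℝ) {k : ℕ} (hrank : W.rank ≤ k) :
    Fintype.card (NZ W) ≤ Fintype.card (Fin k) := by
  have h1 := (Matrix.isHermitian_conjTranspose_mul_self W).rank_eq_card_non_zero_eigs
  have h2 : (Wᴴ * W).rank = W.rank := by
    rw [conjTranspose_eq_transpose_of_trivial, Matrix.rank_transpose_mul_self]
  rw [h2] at h1
  have h3 : Fintype.card (NZ W) = W.rank := h1.symm
  rw [h3, Fintype.card_fin]
  exact hrank

lemma mem_part {k : ℕ} (W : Matrix (Fin n) (Fin m) ℝ) (hrank : W.rank ≤ k) :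
    ∃ (U : Matrix (Fin n) (Fin k) ℝ) (V : Matrix (Fin m) (Fin k) ℝ),
      W = U * Vᵀ ∧ traceNorm W = 1/2 * (frobSq U + frobSq V) := by
  classical
  obtain ⟨e⟩ : Nonempty (NZ W ↪ Fin k) :=
    Function.Embedding.nonempty_of_card_le (card_nz_le W hrank)
  set U : Matrix (Fin n) (Fin k) ℝ :=
    fun a c => ∑ i : NZ W, if e i = c then Real.sqrt (sigma' W i.1) * uvec W i a else 0
    with hUdef
  set V : Matrix (Fin m) (Fin k) ℝ :=
    fun b c => ∑ i : NZ W, if e i = c then Real.sqrt (sigma' W i.1) * evec W i.1 b else 0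
    with hVdef
  refine ⟨U, V, ?_, ?_⟩
  · ext a b
    rw [Matrix.mul_apply]
    simp only [transpose_apply]
    simp only [hUdef, hVdef]
    rw [sum_embed e (fun i => Real.sqrt (sigma' W i.1) * uvec W i a)
        (fun i => Real.sqrt (sigma' W i.1) * evec W i.1 b)]
    have term : ∀ i : NZ W,
        (Real.sqrt (sigma' W i.1) * uvec W i a) * (Real.sqrt (sigma' W i.1) * evec W i.1 b)
        = (W *ᵥ evec W i.1) a * evec W i.1 b := by
      intro i
      have hss : Real.sqrt (sigma' W i.1) * Real.sqrt (sigma' W i.1) = sigma' W i.1 :=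
        Real.mul_self_sqrt (sigma'_nonneg W i.1)
      calc (Real.sqrt (sigma' W i.1) * uvec W i a) * (Real.sqrt (sigma' W i.1) * evec W i.1 b)
          = (Real.sqrt (sigma' W i.1) * Real.sqrt (sigma' W i.1)) *
            ((sigma' W i.1)⁻¹ * ((W *ᵥ evec W i.1) a * evec W i.1 b)) := by
            simp only [uvec]; ring
        _ = (W *ᵥ evec W i.1) a * evec W i.1 b := by
            rw [hss, mul_inv_cancel_left₀ (sigma'_ne W i)]
    rw [Finset.sum_congr rfl (fun i _ => term i)]
    rw [sum_subtype_ne (g := fun i => (W *ᵥ evec W i) a * evec W i b) (fun i hi => by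
      rw [not_not] at hi
      simp [W_evec_eq_zero W i hi])]
    simp only [mulVec, dotProduct]
    calc W a b = ∑ c, W a c * (if c = b then 1 else 0) := by simp
      _ = ∑ c, W a c * ∑ i, evec W i c * evec W i b := by
          simp only [evec_complete]
      _ = ∑ c, ∑ i, W a c * (evec W i c * evec W i b) := by
          congr 1; ext c; rw [Finset.mul_sum]
      _ = ∑ i, ∑ c, W a c * (evec W i c * evec W i b) := Finset.sum_comm
      _ = ∑ i, (∑ c, W a c * evec W i c) * evec W i b := by
          congr 1; ext i; rw [Finset.sum_mul]; congr 1; ext c; ring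
  · have colU : ∀ a, ∑ c, (U a c) ^ 2
        = ∑ i : NZ W, (Real.sqrt (sigma' W i.1) * uvec W i a) ^ 2 := by
      intro a
      simp only [hUdef, pow_two]
      exact sum_embed e _ _
    have colV : ∀ b, ∑ c, (V b c) ^ 2
        = ∑ i : NZ W, (Real.sqrt (sigma' W i.1) * evec W i.1 b) ^ 2 := by
      intro b
      simp only [hVdef, pow_two]
      exact sum_embed e _ _
    have hU : frobSq U = ∑ i : NZ W, sigma' W i.1 := by
      simp only [frobSq, colU]
      rw [Finset.sum_comm]
      congr 1; ext i
      calc ∑ a, (Real.sqrt (sigma' W i.1) * uvec W i a) ^ 2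
          = sigma' W i.1 * ∑ a, uvec W i a * uvec W i a := by
            rw [Finset.mul_sum]; congr 1; ext a
            have hss : Real.sqrt (sigma' W i.1) * Real.sqrt (sigma' W i.1) = sigma' W i.1 :=
              Real.mul_self_sqrt (sigma'_nonneg W i.1)
            calc (Real.sqrt (sigma' W i.1) * uvec W i a) ^ 2
                = (Real.sqrt (sigma' W i.1) * Real.sqrt (sigma' W i.1))
                  * (uvec W i a * uvec W i a) := by ring
              _ = sigma' W i.1 * (uvec W i a * uvec W i a) := by rw [hss]
        _ = sigma' W i.1 := by rw [uvec_norm_one, mul_one]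
    have hV : frobSq V = ∑ i : NZ W, sigma' W i.1 := by
      simp only [frobSq, colV]
      rw [Finset.sum_comm]
      congr 1; ext i
      calc ∑ b, (Real.sqrt (sigma' W i.1) * evec W i.1 b) ^ 2
          = sigma' W i.1 * ∑ b, evec W i.1 b * evec W i.1 b := by
            rw [Finset.mul_sum]; congr 1; ext b
            have hss : Real.sqrt (sigma' W i.1) * Real.sqrt (sigma' W i.1) = sigma' W i.1 :=
              Real.mul_self_sqrt (sigma'_nonneg W i.1)
            calc (Real.sqrt (sigma' W i.1) * evec W i.1 b) ^ 2
                = (Real.sqrt (sigma' W i.1) * Real.sqrt (sigma' W i.1))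
                  * (evec W i.1 b * evec W i.1 b) := by ring
              _ = sigma' W i.1 * (evec W i.1 b * evec W i.1 b) := by rw [hss]
        _ = sigma' W i.1 := by rw [evec_norm_one, mul_one]
    rw [traceNorm_eq_sum_nz, hU, hV]
    ring

lemma lb_part {k : ℕ} (W : Matrix (Fin n) (Fin m) ℝ) (U : Matrix (Fin n) (Fin k) ℝ)
    (V : Matrix (Fin m) (Fin k) ℝ) (hW : W = U * Vᵀ) :
    traceNorm W ≤ 1/2 * (frobSq U + frobSq V) := by
  classical
  set x : NZ W → Fin k → ℝ := fun i c => ∑ a, uvec W i a * U a c with hx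
  set y : NZ W → Fin k → ℝ := fun i c => ∑ b, evec W i.1 b * V b c with hy
  have claim1 : ∀ i : NZ W, sigma' W i.1 = ∑ c, x i c * y i c := by
    intro i
    have hstep : ∀ a, ∑ c, U a c * y i c = (W *ᵥ evec W i.1) a := by
      intro a
      calc ∑ c, U a c * y i c
          = ∑ c, ∑ b, U a c * (evec W i.1 b * V b c) := by
            congr 1; ext c; simp only [hy]; rw [Finset.mul_sum]
        _ = ∑ b, ∑ c, U a c * (evec W i.1 b * V b c) := Finset.sum_comm
        _ = ∑ b, (∑ c, U a c * V b c) * evec W i.1 b := by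
            congr 1; ext b; rw [Finset.sum_mul]; congr 1; ext c; ring
        _ = ∑ b, (U * Vᵀ) a b * evec W i.1 b := by
            simp only [Matrix.mul_apply, transpose_apply]
        _ = (W *ᵥ evec W i.1) a := by rw [← hW]; simp [mulVec, dotProduct]
    calc sigma' W i.1 = ∑ a, uvec W i a * (W *ᵥ evec W i.1) a := (uvec_dot_W W i).symm
      _ = ∑ a, uvec W i a * ∑ c, U a c * y i c := by simp only [hstep]
      _ = ∑ a, ∑ c, uvec W i a * (U a c * y i c) := by
          congr 1; ext a; rw [Finset.mul_sum]
      _ = ∑ c, ∑ a, uvec W i a * (U a c * y i c) := Finset.sum_comm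
      _ = ∑ c, x i c * y i c := by
          congr 1; ext c; simp only [hx]; rw [Finset.sum_mul]; congr 1; ext a; ring
  have claim2 : ∑ i : NZ W, ∑ c, x i c ^ 2 ≤ frobSq U := by
    have h := fun c => bessel (fun i : NZ W => uvec W i) (uvec_orth W) (fun a => U a c)
    calc ∑ i : NZ W, ∑ c, x i c ^ 2 = ∑ c, ∑ i : NZ W, x i c ^ 2 := Finset.sum_comm
      _ ≤ ∑ c, ∑ a, (U a c) ^ 2 := Finset.sum_le_sum (fun c _ => by simpa [hx] using h c)
      _ = frobSq U := by simp only [frobSq]; exact Finset.sum_comm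
  have claim3 : ∑ i : NZ W, ∑ c, y i c ^ 2 ≤ frobSq V := by
    have h := fun c => bessel (fun i : NZ W => evec W i.1) (evec_orth_nz W) (fun b => V b c)
    calc ∑ i : NZ W, ∑ c, y i c ^ 2 = ∑ c, ∑ i : NZ W, y i c ^ 2 := Finset.sum_comm
      _ ≤ ∑ c, ∑ b, (V b c) ^ 2 := Finset.sum_le_sum (fun c _ => by simpa [hy] using h c)
      _ = frobSq V := by simp only [frobSq]; exact Finset.sum_comm
  have main : (2:ℝ) * ∑ i : NZ W, sigma' W i.1
      ≤ (∑ i : NZ W, ∑ c, x i c ^ 2) + (∑ i : NZ W, ∑ c, y i c ^ 2) := by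
    rw [Finset.mul_sum, ← Finset.sum_add_distrib]
    apply Finset.sum_le_sum
    intro i _
    rw [claim1 i, Finset.mul_sum, ← Finset.sum_add_distrib]
    apply Finset.sum_le_sum
    intro c _
    have := two_mul_le_add_sq (x i c) (y i c)
    linarith
  rw [traceNorm_eq_sum_nz]
  linarith

end TraceNormAux

open TraceNormAux

/-- Variational characterization of the trace norm: for W of rank at most k,
‖W‖_* = min { ½(‖U‖_F² + ‖V‖_F²) : W = UVᵀ, U ∈ ℝ^{n×k}, V ∈ ℝ^{m×k} },
and the minimum is attained. -/
theorem traceNorm_eq_min_factorization {n m k : ℕ}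
    (W : Matrix (Fin n) (Fin m) ℝ) (hrank : W.rank ≤ k) :
    IsLeast {c : ℝ | ∃ (U : Matrix (Fin n) (Fin k) ℝ) (V : Matrix (Fin m) (Fin k) ℝ),
        W = U * Vᵀ ∧ c = (1/2) * (frobSq U + frobSq V)} (traceNorm W) := by
  constructor
  · obtain ⟨U, V, h1, h2⟩ := mem_part W hrank
    exact ⟨U, V, h1, h2⟩
  · rintro r ⟨U, V, hW, rfl⟩
    exact lb_part W U V hW
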